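/- Let T > 0 and let g : [0,T] → ℝ be a C¹ function with g(t) ≥ 0 for all t ∈ [0,T]. Suppose there exist positive numbers α, A, B such that g'(t) + A·g(t)^(1+α) ≤ B·g(t) for each t ∈ [0,T]. Then g(t) ≤ (1/(α·A·t))^(1/α) · e^(B·t) for each t ∈ (0,T]. -/

import Mathlib

open Real Set

theorem stmt_0 (T : ℝ) (hT : 0 < T) (g g' : ℝ → ℝ)
    (hderiv : ∀ t ∈ Icc (0:ℝ) T, HasDerivAt g (g' t) t)
    (hcont : ContinuousOn g' (Icc 0 T))
    (hpos : ∀ t ∈ Icc (0:ℝ) T, 0 ≤ g t)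
    (α A B : ℝ) (hα : 0 < α) (hA : 0 < A) (hB : 0 < B)
    (hineq : ∀ t ∈ Icc (0:ℝ) T, g' t + A * (g t) ^ (1 + α) ≤ B * g t) :
    ∀ t ∈ Ioc (0:ℝ) T, g t ≤ (1 / (α * A * t)) ^ (1 / α) * Real.exp (B * t) := by
  -- auxiliary function h u = exp(-B u) * g u
  set h : ℝ → ℝ := fun u => Real.exp (-B * u) * g u with hh
  set h' : ℝ → ℝ := fun u => Real.exp (-B * u) * (g' u - B * g u) with hh'
  have hderivh : ∀ u ∈ Icc (0:ℝ) T, HasDerivAt h (h' u) u := by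
    intro u hu
    have he : HasDerivAt (fun u => Real.exp (-B * u)) (-B * Real.exp (-B * u)) u := by
      simpa [mul_comm] using ((hasDerivAt_id u).const_mul (-B)).exp
    have : HasDerivAt (fun y => Real.exp (-B * y) * g y) _ u := he.mul (hderiv u hu)
    convert this using 1
    simp [hh']; ring
  -- derivative bound : h' u ≤ - A * exp(-B u) * (g u)^(1+α)
  have hkey : ∀ u ∈ Icc (0:ℝ) T, h' u ≤ -A * (Real.exp (-B * u) * (g u) ^ (1 + α)) := by
    intro u hu
    have h1 := hineq u hu
    have h2 : g' u - B * g u ≤ -(A * (g u) ^ (1 + α)) := by linarith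
    have h3 := Real.exp_pos (-B * u)
    calc h' u = Real.exp (-B * u) * (g' u - B * g u) := rfl
      _ ≤ Real.exp (-B * u) * (-(A * (g u) ^ (1 + α))) := by
          exact mul_le_mul_of_nonneg_left h2 h3.le
      _ = -A * (Real.exp (-B * u) * (g u) ^ (1 + α)) := by ring
  have hh'nonpos : ∀ u ∈ Icc (0:ℝ) T, h' u ≤ 0 := by
    intro u hu
    have := hkey u hu
    have h4 : 0 ≤ Real.exp (-B * u) * (g u) ^ (1 + α) :=
      mul_nonneg (Real.exp_pos _).le (Real.rpow_nonneg (hpos u hu) _)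
    nlinarith
  -- h is antitone on [0,T]
  have hconth : ContinuousOn h (Icc 0 T) := fun u hu =>
    (hderivh u hu).continuousAt.continuousWithinAt
  have hanti : AntitoneOn h (Icc 0 T) := by
    apply antitoneOn_of_deriv_nonpos (convex_Icc 0 T) hconth
    · intro u hu
      rw [interior_Icc] at hu
      exact (hderivh u (Ioo_subset_Icc_self hu)).differentiableAt.differentiableWithinAt
    · intro u hu
      rw [interior_Icc] at hu
      rw [(hderivh u (Ioo_subset_Icc_self hu)).deriv]
      exact hh'nonpos u (Ioo_subset_Icc_self hu)
  intro t ht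
  have htmem : t ∈ Icc (0:ℝ) T := ⟨ht.1.le, ht.2⟩
  have htpos : 0 < t := ht.1
  have hαAt : 0 < α * A * t := by positivity
  rcases (hpos t htmem).eq_or_lt with hg0 | hgpos
  · -- g t = 0 : RHS nonneg
    rw [← hg0]
    positivity
  -- g t > 0, hence h t > 0 and by antitonicity h > 0 on [0,t]
  have hht : 0 < h t := mul_pos (Real.exp_pos _) hgpos
  have hsub : Icc (0:ℝ) t ⊆ Icc 0 T := Icc_subset_Icc le_rfl ht.2
  have hpos' : ∀ u ∈ Icc (0:ℝ) t, 0 < h u := by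
    intro u hu
    exact lt_of_lt_of_le hht (hanti (hsub hu) htmem hu.2)
  -- φ u = (h u) ^ (-α)
  set φ : ℝ → ℝ := fun u => (h u) ^ (-α) with hφ
  have hderivφ : ∀ u ∈ Icc (0:ℝ) t,
      HasDerivAt φ (h' u * (-α) * (h u) ^ (-α - 1)) u := by
    intro u hu
    exact (hderivh u (hsub hu)).rpow_const (Or.inl (hpos' u hu).ne')
  -- the derivative of φ is at least α * A on [0,t]
  have hφ' : ∀ u ∈ Icc (0:ℝ) t, α * A ≤ h' u * (-α) * (h u) ^ (-α - 1) := by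
    intro u hu
    have hhu := hpos' u hu
    have huT := hsub hu
    -- h u ^ (1+α) ≤ exp(-B u) * g u ^ (1+α)
    have e1 : (h u) ^ (1 + α) = Real.exp (-B * u) ^ (1 + α) * (g u) ^ (1 + α) :=
      Real.mul_rpow (Real.exp_pos _).le (hpos u huT)
    have e2 : Real.exp (-B * u) ^ (1 + α) = Real.exp (-B * u * (1 + α)) := by
      rw [← Real.exp_mul]
    have e3 : Real.exp (-B * u * (1 + α)) ≤ Real.exp (-B * u) := by
      apply Real.exp_le_exp.2
      nlinarith [mul_nonneg (mul_nonneg hB.le hu.1) hα.le]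
    have e4 : (h u) ^ (1 + α) ≤ Real.exp (-B * u) * (g u) ^ (1 + α) := by
      rw [e1, e2]
      exact mul_le_mul_of_nonneg_right e3 (Real.rpow_nonneg (hpos u huT) _)
    have e5 : h' u ≤ -A * (h u) ^ (1 + α) := by
      have := hkey u huT
      nlinarith
    -- multiply by α * (h u)^(-α-1) ≥ 0
    have e6 : 0 < (h u) ^ (-α - 1) := Real.rpow_pos_of_pos hhu _
    have hqp : (h u) ^ (1 + α) * (h u) ^ (-α - 1) = 1 := by
      rw [← Real.rpow_add hhu, show 1 + α + (-α - 1) = 0 by ring, Real.rpow_zero]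
    have e7' : h' u * (α * (h u) ^ (-α - 1))
        ≤ (-A * (h u) ^ (1 + α)) * (α * (h u) ^ (-α - 1)) :=
      mul_le_mul_of_nonneg_right e5 (by positivity)
    have e8 : (-A * (h u) ^ (1 + α)) * (α * (h u) ^ (-α - 1)) = -(A * α) := by
      calc (-A * (h u) ^ (1 + α)) * (α * (h u) ^ (-α - 1))
          = (-(A * α)) * ((h u) ^ (1 + α) * (h u) ^ (-α - 1)) := by ring
        _ = -(A * α) := by rw [hqp]; ring
    have e9 : h' u * (-α) * (h u) ^ (-α - 1)
        = -(h' u * (α * (h u) ^ (-α - 1))) := by ring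
    rw [e9]
    rw [e8] at e7'
    linarith
  -- ψ u = φ u - α A u is monotone on [0,t]
  set ψ : ℝ → ℝ := fun u => φ u - α * A * u with hψ
  have hderivψ : ∀ u ∈ Icc (0:ℝ) t,
      HasDerivAt ψ (h' u * (-α) * (h u) ^ (-α - 1) - α * A) u := by
    intro u hu
    exact (hderivφ u hu).sub (((hasDerivAt_id u).const_mul (α * A)).congr_deriv (by ring))
  have hmono : MonotoneOn ψ (Icc 0 t) := by
    apply monotoneOn_of_deriv_nonneg (convex_Icc 0 t)
    · exact fun u hu => (hderivψ u hu).continuousAt.continuousWithinAt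
    · intro u hu
      rw [interior_Icc] at hu
      exact (hderivψ u (Ioo_subset_Icc_self hu)).differentiableAt.differentiableWithinAt
    · intro u hu
      rw [interior_Icc] at hu
      rw [(hderivψ u (Ioo_subset_Icc_self hu)).deriv]
      have := hφ' u (Ioo_subset_Icc_self hu)
      linarith
  have h0mem : (0:ℝ) ∈ Icc (0:ℝ) t := ⟨le_rfl, htpos.le⟩
  have htmem' : t ∈ Icc (0:ℝ) t := ⟨htpos.le, le_rfl⟩
  have hψ0t := hmono h0mem htmem' htpos.le
  have hφ0 : 0 < φ 0 := Real.rpow_pos_of_pos (hpos' 0 h0mem) _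
  -- so α A t ≤ (h t)^(-α)
  have hfin : α * A * t ≤ (h t) ^ (-α) := by
    have : φ 0 - 0 ≤ φ t - α * A * t := by simpa [hψ] using hψ0t
    linarith
  -- conclude h t ≤ (1/(α A t))^(1/α)
  have hconc : h t ≤ (1 / (α * A * t)) ^ (1 / α) := by
    have step : ((h t) ^ (-α)) ^ (-(1/α)) ≤ (α * A * t) ^ (-(1/α)) :=
      Real.rpow_le_rpow_of_nonpos hαAt hfin (neg_nonpos.mpr (by positivity))
    have l1 : ((h t) ^ (-α)) ^ (-(1/α)) = h t := by
      rw [← Real.rpow_mul hht.le, show -α * -(1/α) = 1 by field_simp, Real.rpow_one]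
    have l2 : (α * A * t) ^ (-(1/α)) = (1 / (α * A * t)) ^ (1 / α) := by
      rw [Real.rpow_neg hαAt.le, show (1:ℝ)/(α*A*t) = (α*A*t)⁻¹ from one_div _,
        Real.inv_rpow hαAt.le]
    rw [l1, l2] at step
    exact step
  -- g t = exp(B t) * h t
  have hgt : g t = Real.exp (B * t) * h t := by
    rw [hh]
    rw [← mul_assoc, ← Real.exp_add]
    norm_num
  rw [hgt]
  calc Real.exp (B * t) * h t ≤ Real.exp (B * t) * (1 / (α * A * t)) ^ (1 / α) :=
        mul_le_mul_of_nonneg_left hconc (Real.exp_pos _).le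
    _ = (1 / (α * A * t)) ^ (1 / α) * Real.exp (B * t) := mul_comm _ _
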